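/- Let 0 < J < 1 and let 0 < P < Q satisfy (1+J)(Q−P) = log Q − log P and Q > 1/(1−J). Then 1/P − 1 > 3J; equivalently, P < 1/(1+3J). -/

import Mathlib

open Real

private lemma log_lt_half (x : ℝ) (hx : 1 < x) : Real.log x < (x - 1/x) / 2 := by
  have h0 : (0:ℝ) < x := by linarith
  have h1 : Real.log x < Real.sinh (Real.log x) :=
    Real.self_lt_sinh_iff.mpr (Real.log_pos hx)
  rw [Real.sinh_log h0] at h1
  simpa [one_div] using h1

/-- if 0 < J < 1 and 0 < P < Q satisfy
(1+J)(Q−P) = log Q − log P and Q > 1/(1−J), then 1/P − 1 > 3J; equivalently,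
P < 1/(1+3J). -/
theorem stmt_17 (J P Q : ℝ) (hJ0 : 0 < J) (hJ1 : J < 1)
    (hP : 0 < P) (hPQ : P < Q)
    (h : (1 + J) * (Q - P) = Real.log Q - Real.log P)
    (hQ : 1 / (1 - J) < Q) :
    3 * J < 1 / P - 1 ∧ P < 1 / (1 + 3 * J) := by
  have hJm : (0:ℝ) < 1 - J := by linarith
  have hJ3 : (0:ℝ) < 1 + 3 * J := by linarith
  have hJp : (0:ℝ) < 1 + J := by linarith
  have hb1 : (1:ℝ) < 1 / (1 - J) := (one_lt_div hJm).mpr (by linarith)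
  have ha1 : (1:ℝ) < 1 + 3 * J := by linarith
  have hQ1 : (1:ℝ) < Q := lt_trans hb1 hQ
  have hQ0 : (0:ℝ) < Q := by linarith
  -- Step (i): P * (1+J) < 1
  have hPm : P * (1 + J) < 1 := by
    by_contra hc
    push_neg at hc
    have hQP1 : 1 < Q / P := (one_lt_div hP).mpr hPQ
    have h2 : Real.log (Q / P) < Q / P - 1 :=
      Real.log_lt_sub_one_of_pos (by positivity) (ne_of_gt hQP1)
    rw [Real.log_div (by linarith) (ne_of_gt hP)] at h2
    have h3 : Q / P - 1 = (Q - P) / P := by field_simp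
    rw [h3] at h2
    have h4 : (Q - P) / P ≤ (Q - P) * (1 + J) := by
      rw [div_le_iff₀ hP]
      nlinarith [sub_pos.mpr hPQ]
    nlinarith [h, h2, h4]
  -- Step A : log Q - log (1/(1-J)) < (1+J) * (Q - 1/(1-J))
  have hA : Real.log Q - Real.log (1 / (1 - J)) < (1 + J) * (Q - 1 / (1 - J)) := by
    have hr1 : 1 < Q * (1 - J) := by
      have := (div_lt_iff₀ hJm).mp hQ
      linarith
    have h2 : Real.log (Q * (1 - J)) < Q * (1 - J) - 1 :=
      Real.log_lt_sub_one_of_pos (by positivity) (by linarith)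
    rw [Real.log_mul (ne_of_gt hQ0) (ne_of_gt hJm)] at h2
    have h3 : Real.log (1 / (1 - J)) = - Real.log (1 - J) := by
      rw [one_div, Real.log_inv]
    have h4 : Q * (1 - J) - 1 ≤ (1 + J) * (Q - 1 / (1 - J)) := by
      have e : Q * (1 - J) - 1 = (1 - J) * (Q - 1 / (1 - J)) := by
        field_simp
      rw [e]
      have hQb : 0 < Q - 1 / (1 - J) := by linarith
      nlinarith
    linarith
  -- Step B : log (1/(1-J)) - log (1/(1+3J)) < (1+J) * (1/(1-J) - 1/(1+3J))
  have hB : Real.log (1 / (1 - J)) - Real.log (1 / (1 + 3 * J))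
      < (1 + J) * (1 / (1 - J) - 1 / (1 + 3 * J)) := by
    have l1 : Real.log (1 / (1 - J)) < (1 / (1 - J) - (1 - J)) / 2 := by
      have := log_lt_half (1 / (1 - J)) hb1
      rwa [one_div_one_div] at this
    have l2 : Real.log (1 + 3 * J) < ((1 + 3 * J) - 1 / (1 + 3 * J)) / 2 :=
      log_lt_half (1 + 3 * J) ha1
    have h3 : Real.log (1 / (1 + 3 * J)) = - Real.log (1 + 3 * J) := by
      rw [one_div, Real.log_inv]
    have key : (1 / (1 - J) - (1 - J)) / 2 + ((1 + 3 * J) - 1 / (1 + 3 * J)) / 2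
        ≤ (1 + J) * (1 / (1 - J) - 1 / (1 + 3 * J)) := by
      rw [← add_div, ← sub_nonneg]
      have e : (1 + J) * (1 / (1 - J) - 1 / (1 + 3 * J)) -
          (1 / (1 - J) - (1 - J) + ((1 + 3 * J) - 1 / (1 + 3 * J))) / 2
          = 6 * J ^ 3 / ((1 - J) * (1 + 3 * J)) := by
        field_simp
        ring
      rw [e]
      positivity
    linarith
  -- Step (ii): P < 1/(1+3J)
  have hPa : P < 1 / (1 + 3 * J) := by
    by_contra hc
    push_neg at hc
    have ha0 : (0:ℝ) < 1 / (1 + 3 * J) := by positivity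
    have hfa : (1 + J) * (P - 1 / (1 + 3 * J)) ≤
        Real.log P - Real.log (1 / (1 + 3 * J)) := by
      have hr : Real.log (1 / (1 + 3 * J) / P) ≤ 1 / (1 + 3 * J) / P - 1 :=
        Real.log_le_sub_one_of_pos (by positivity)
      rw [Real.log_div (ne_of_gt ha0) (ne_of_gt hP)] at hr
      have e1 : 1 / (1 + 3 * J) / P - 1 = -((P - 1 / (1 + 3 * J)) / P) := by
        field_simp; ring
      rw [e1] at hr
      have h5 : (P - 1 / (1 + 3 * J)) * (1 + J) ≤ (P - 1 / (1 + 3 * J)) / P := by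
        rw [le_div_iff₀ hP]
        nlinarith [sub_nonneg.mpr hc]
      nlinarith [hr, h5]
    nlinarith [h, hA, hB, hfa]
  constructor
  · have h6 : P * (1 + 3 * J) < 1 := by
      have := (lt_div_iff₀ hJ3).mp hPa
      linarith
    have h7 : 1 + 3 * J < 1 / P := by
      rw [lt_div_iff₀ hP]
      nlinarith
    linarith
  · exact hPa
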